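/- arXiv:1811.06810 — 2 statements merged into one kernel-verified Lean document; each statement's English description precedes it below -/
import Mathlib

section
/- Let R be a join-semilattice with at least two elements, X a type, and ε a multi-valued selection function on X. Then ε is upwards closed if and only if for every type Y, every multi-valued selection function δ on Y, and every q : X × Y → R, one has Rat(q, ε, δ) ⊆ (ε ⊗ δ)(q). -/
universe u

/-- A multi-valued selection function on `X` with outcomes in `R`:
a map `(X → R) → Finset X` whose values are all nonempty. -/
structure Sel (R X : Type u) [SemilatticeSup R] : Type u where
  fn : (X → R) → Finset X
  ne : ∀ k, (fn k).Nonempty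

variable {R : Type u} [SemilatticeSup R]

/-- A selection function is witnessing if whenever `x` is selected in the context
obtained by taking pointwise joins over an indexing function `I`, there is a choice
function `p` for `I` in whose induced context `x` is also selected. -/
def Witnessing {X : Type u} (ε : Sel R X) : Prop :=
  ∀ (I : X → Finset (X → R)) (hI : ∀ x, (I x).Nonempty) (x : X),
    x ∈ ε.fn (fun x' => (I x').sup' (hI x') (fun P => P x')) →
      ∃ p : X → X → R, (∀ x', p x' ∈ I x') ∧ x ∈ ε.fn (fun x' => p x' x')

/-- A selection function is upwards closed if whenever `x` is selected in the context
induced by a choice function `p` for an indexing function `I`, then `x` is also selected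
in the context obtained by taking pointwise joins over `I`. -/
def UpwardsClosed {X : Type u} (ε : Sel R X) : Prop :=
  ∀ (I : X → Finset (X → R)) (hI : ∀ x, (I x).Nonempty) (p : X → X → R),
    (∀ x', p x' ∈ I x') → ∀ x, x ∈ ε.fn (fun x' => p x' x') →
      x ∈ ε.fn (fun x' => (I x').sup' (hI x') (fun P => P x'))

/-- The product of selection functions. -/
def Sel.prod {X Y : Type u} (ε : Sel R X) (δ : Sel R Y) : Sel R (X × Y) where
  fn q :=
    ((ε.fn (fun x => (δ.fn (fun y => q (x, y))).sup' (δ.ne _) (fun y => q (x, y)))).sigma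
      (fun x => δ.fn (fun y => q (x, y)))).map
      ⟨fun p => (p.1, p.2), fun a b h => by
        cases a; cases b
        simp only [Prod.mk.injEq] at h
        obtain ⟨h1, h2⟩ := h
        subst h1; subst h2; rfl⟩
  ne q := by
    obtain ⟨x, hx⟩ := ε.ne (fun x => (δ.fn (fun y => q (x, y))).sup' (δ.ne _) (fun y => q (x, y)))
    obtain ⟨y, hy⟩ := δ.ne (fun y => q (x, y))
    exact ⟨(x, y), Finset.mem_map.2 ⟨⟨x, y⟩, Finset.mem_sigma.mpr ⟨hx, hy⟩, rfl⟩⟩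

/-- A strategy profile `(σ₁, σ₂)` is rational. -/
def IsRational {X Y : Type u} (ε : Sel R X) (δ : Sel R Y) (q : X × Y → R)
    (σ₁ : X) (σ₂ : X → Y) : Prop :=
  (∃ yf : X → Y, (∀ x, yf x ∈ δ.fn (fun y' => q (x, y'))) ∧
      σ₁ ∈ ε.fn (fun x => q (x, yf x))) ∧
  ∀ x, σ₂ x ∈ δ.fn (fun y' => q (x, y'))

/-- The set of rational plays. -/
def RatPlays {X Y : Type u} (ε : Sel R X) (δ : Sel R Y) (q : X × Y → R) : Set (X × Y) :=
  {p | ∃ σ₁ σ₂, IsRational ε δ q σ₁ σ₂ ∧ p = (σ₁, σ₂ σ₁)}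

/-- Subgame perfect strategy profile. -/
def SubgamePerfect {X Y : Type u} (ε : Sel R X) (δ : Sel R Y) (q : X × Y → R)
    (σ₁ : X) (σ₂ : X → Y) : Prop :=
  σ₁ ∈ ε.fn (fun x => q (x, σ₂ x)) ∧ ∀ x, σ₂ x ∈ δ.fn (fun y => q (x, y))

/-- The set of subgame perfect plays. -/
def SPPlays {X Y : Type u} (ε : Sel R X) (δ : Sel R Y) (q : X × Y → R) : Set (X × Y) :=
  {p | ∃ σ₁ σ₂, SubgamePerfect ε δ q σ₁ σ₂ ∧ p = (σ₁, σ₂ σ₁)}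


lemma Sel.mem_prod_iff {X Y : Type u} (ε : Sel R X) (δ : Sel R Y) (q : X × Y → R)
    (x : X) (y : Y) :
    (x, y) ∈ (ε.prod δ).fn q ↔
      x ∈ ε.fn (fun x => (δ.fn (fun y => q (x, y))).sup' (δ.ne _) (fun y => q (x, y))) ∧
        y ∈ δ.fn (fun y => q (x, y)) := by
  constructor
  · intro h
    obtain ⟨⟨a, b⟩, hab, heq⟩ := Finset.mem_map.1 h
    change (a, b) = (x, y) at heq
    simp only [Prod.mk.injEq] at heq
    obtain ⟨h1, h2⟩ := heq
    subst h1; subst h2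
    exact Finset.mem_sigma.mp hab
  · intro ⟨h1, h2⟩
    exact Finset.mem_map.2 ⟨⟨x, y⟩, Finset.mem_sigma.mpr ⟨h1, h2⟩, rfl⟩

lemma eval_injective {X : Type u} [Nontrivial R] {a b : X}
    (h : (fun P : X → R => P a) = (fun P : X → R => P b)) : a = b := by
  classical
  by_contra hne
  obtain ⟨r, s, hrs⟩ := exists_pair_ne R
  have h1 : (if a = a then r else s) = (if b = a then r else s) :=
    congrFun h (fun z => if z = a then r else s)
  rw [if_pos rfl, if_neg (fun hba : b = a => hne hba.symm)] at h1
  exact hrs h1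

/-- `ε` is upwards closed iff for every `Y`, `δ`, `q`, `Rat(q, ε, δ) ⊆ (ε ⊗ δ)(q)`. -/
theorem upwardsClosed_iff_rat_subset_prod {R X : Type u} [SemilatticeSup R] [Nontrivial R]
    (ε : Sel R X) :
    UpwardsClosed ε ↔
      ∀ (Y : Type u) (δ : Sel R Y) (q : X × Y → R),
        ∀ p : X × Y, p ∈ RatPlays ε δ q → p ∈ (ε.prod δ).fn q := by
  classical
  constructor
  · intro hUC Y δ q pp hpp
    obtain ⟨σ₁, σ₂, ⟨⟨yf, hyf, hσ₁⟩, hσ₂⟩, rfl⟩ := hpp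
    rw [Sel.mem_prod_iff]
    refine ⟨?_, hσ₂ σ₁⟩
    have hINe : ∀ x : X,
        ((δ.fn (fun y => q (x, y))).image (fun y (_ : X) => q (x, y))).Nonempty :=
      fun x => (δ.ne _).image _
    have key := hUC (fun x => (δ.fn (fun y => q (x, y))).image (fun y (_ : X) => q (x, y)))
      hINe (fun x' _ => q (x', yf x'))
      (fun x' => Finset.mem_image.2 ⟨yf x', hyf x', rfl⟩) σ₁ hσ₁
    have hfun : (fun x' => (((δ.fn (fun y => q (x', y))).image
          (fun y (_ : X) => q (x', y)))).sup' (hINe x') (fun P => P x')) =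
        (fun x => (δ.fn (fun y => q (x, y))).sup' (δ.ne _) (fun y => q (x, y))) := by
      funext x'
      rw [Finset.sup'_image]
      rfl
    exact (congrArg ε.fn hfun) ▸ key
  · intro h I hI p hp x hx
    let f₀ : X → R := fun _ => (exists_pair_ne R).choose
    let dfn : ((X → R) → R) → Finset (X → R) :=
      fun k => if hk : ∃ a : X, k = (fun P : X → R => P a) then I hk.choose else {f₀}
    have dne : ∀ k, (dfn k).Nonempty := by
      intro k
      show (if hk : ∃ a : X, k = (fun P : X → R => P a) then I hk.choose else {f₀}).Nonempty
      split
      · exact hI _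
      · exact Finset.singleton_nonempty _
    let δ : Sel R (X → R) := ⟨dfn, dne⟩
    let q : X × (X → R) → R := fun z => z.2 z.1
    have hδI : ∀ a : X, δ.fn (fun P => q (a, P)) = I a := by
      intro a
      have hk : ∃ a' : X, (fun P : X → R => q (a, P)) = (fun P : X → R => P a') := ⟨a, rfl⟩
      have h1 : δ.fn (fun P => q (a, P)) = I hk.choose := dif_pos hk
      rw [h1]
      exact congrArg I (eval_injective hk.choose_spec.symm)
    have hrat : ((x, p x) : X × (X → R)) ∈ RatPlays ε δ q := by
      refine ⟨x, p, ⟨⟨p, ?_, hx⟩, ?_⟩, rfl⟩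
      · intro a; rw [hδI a]; exact hp a
      · intro a; rw [hδI a]; exact hp a
    have hmem := h (X → R) δ q _ hrat
    rw [Sel.mem_prod_iff] at hmem
    have h1 := hmem.1
    have hSne : ∀ a : X, (δ.fn (fun P => q (a, P))).Nonempty := fun a => δ.ne _
    have hfun : (fun a => (δ.fn (fun P => q (a, P))).sup' (δ.ne _) (fun P => q (a, P))) =
        (fun x' => (I x').sup' (hI x') (fun P => P x')) := by
      funext a
      have he : δ.fn (fun P => q (a, P)) = I a := hδI a
      exact Finset.sup'_congr _ he (fun P _ => rfl)
    exact (congrArg ε.fn hfun) ▸ h1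
end

section
/- Let R be a join-semilattice with at least two elements, let n ≥ 1, let X₁, …, X_{n-1} be nonempty finite types and ε_i a multi-valued selection function on X_i for each i < n. Then ε_i is upwards closed for every i < n if and only if for every nonempty finite type Xₙ, every multi-valued selection function εₙ on Xₙ, and every outcome function q : X₁ × ⋯ × Xₙ → R, the set (⨂_{i=1}^n ε_i)(q) is a superset of the set of Σ(G) plays of the game G = (q, (ε₁, …, εₙ)). -/
universe u

variable {R : Type u} [SemilatticeSup R]

/-- Transport a selection function along an equivalence of move types. -/
def Sel.comap {X Y : Type u} (ε : Sel R X) (e : X ≃ Y) : Sel R Y where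
  fn k := (ε.fn (fun x => k (e x))).map e.toEmbedding
  ne k := (ε.ne _).map

/-- The identification of `X 0` with plays of a one-round game. -/
def oneEquiv (X : Fin 1 → Type u) : X 0 ≃ ∀ i, X i where
  toFun x i := Fin.cases x (fun j => j.elim0) i
  invFun f := f 0
  left_inv x := by simp
  right_inv f := funext fun i => Fin.cases rfl (fun j => j.elim0) i

/-- The `n`-fold product of selection functions, iterating the binary product to the
left: `⨂_{i} ε_i = ε 0 ⊗ (⨂_{i>0} ε_i)`, identifying plays `∀ i, X i` with
`X 0 × (∀ i, X i.succ)`; the product of a single selection function is itself. -/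
def bigProd : {n : ℕ} → {X : Fin (n + 1) → Type u} → (∀ i, Sel R (X i)) →
    Sel R (∀ i, X i)
  | 0, X, ε => (ε 0).comap (oneEquiv X)
  | _ + 1, X, ε => ((ε 0).prod (bigProd (fun i => ε i.succ))).comap (Fin.consEquiv X)

/-- A partial play of length `k` in a game with move types `X`: the moves of all
rounds `j` with `j < k`. -/
def PartialPlay {n : ℕ} (X : Fin n → Type u) (k : ℕ) : Type u :=
  ∀ j : Fin n, (j : ℕ) < k → X j

/-- A strategy for round `i`: a choice of move in `X i` contingent on the moves of
all previous rounds. -/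
def Strat {n : ℕ} (X : Fin n → Type u) (i : Fin n) : Type u :=
  PartialPlay X i → X i

/-- Extending a partial play by one further move. -/
def PartialPlay.snoc {n : ℕ} {X : Fin n → Type u} {i : Fin n}
    (x : PartialPlay X i) (y : X i) : PartialPlay X (i + 1) :=
  fun j hj =>
    if h : (j : ℕ) < i then x j h
    else (Fin.ext (by omega) : i = j) ▸ y

/-- The moves of the first `m` rounds obtained by playing out the strategies `σ`
from the partial play `x` of length `k` onwards. -/
def extPlay {n : ℕ} {X : Fin n → Type u} (σ : ∀ i, Strat X i) (k : ℕ)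
    (x : PartialPlay X k) : (m : ℕ) → PartialPlay X m
  | 0 => fun _ hj => absurd hj (Nat.not_lt_zero _)
  | m + 1 => fun j hj =>
      if hk : (j : ℕ) < k then x j hk
      else if hm : (j : ℕ) < m then extPlay σ k x m j hm
      else σ j (fun j' hj' => extPlay σ k x m j' (by omega))

/-- The strategic extension of a partial play `x` by the strategies `σ` (only the
strategies of rounds `≥ k` are used). -/
def stratExt {n : ℕ} {X : Fin n → Type u} (σ : ∀ i, Strat X i) (k : ℕ)
    (x : PartialPlay X k) : ∀ j, X j :=
  fun j => extPlay σ k x n j j.isLt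

/-- The strategic play of a strategy profile `σ`. -/
def stratPlay {n : ℕ} {X : Fin n → Type u} (σ : ∀ i, Strat X i) : ∀ j, X j :=
  stratExt σ 0 (fun _ hj => absurd hj (Nat.not_lt_zero _))

/-- A (round-indexed) set `Γ` of strategies is consistent for the game with outcome
function `q` and selection functions `ε`: for every round `i`, every `σi ∈ Γ i` and
every partial play `x` of length `i`, there are strategies in `Γ` for the rounds
after `i` such that `σi x` is selected by `ε i` in the context where each possible
next move `y` leads to the outcome of the strategic extension of `(x, y)`. -/
def Consistent {n : ℕ} {X : Fin n → Type u} {R : Type u} [SemilatticeSup R]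
    (q : (∀ i, X i) → R) (ε : ∀ i, Sel R (X i)) (Γ : ∀ i, Set (Strat X i)) : Prop :=
  ∀ (i : Fin n), ∀ σi ∈ Γ i, ∀ x : PartialPlay X i,
    ∃ σ : ∀ j, Strat X j, (∀ j, i < j → σ j ∈ Γ j) ∧
      σi x ∈ (ε i).fn (fun y => q (stratExt σ (i + 1) (x.snoc y)))

/-- The maximal consistent set `Σ(G)` of strategies, defined by downwards recursion
on the round: a round-`i` strategy belongs to `Σ(G)` iff it, together with all the
strategies of `Σ(G)` at later rounds, forms a consistent set. -/
def SigmaG {n : ℕ} {X : Fin n → Type u} {R : Type u} [SemilatticeSup R]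
    (q : (∀ i, X i) → R) (ε : ∀ i, Sel R (X i)) : (i : Fin n) → Set (Strat X i) :=
  fun i =>
    {σi | Consistent q ε (fun j =>
      if h : i = j then {h ▸ σi}
      else if hij : i < j then SigmaG q ε j
      else ∅)}
termination_by i => n - (i : ℕ)
decreasing_by
  have h1 : (i : ℕ) < (j : ℕ) := hij
  have h2 : (j : ℕ) < n := j.isLt
  omega

/-- `x` is a `Σ(G)` play if it is the strategic play of a strategy profile all of
whose strategies lie in `Σ(G)`. -/
def IsSigmaPlay {n : ℕ} {X : Fin n → Type u} {R : Type u} [SemilatticeSup R]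
    (q : (∀ i, X i) → R) (ε : ∀ i, Sel R (X i)) (x : ∀ i, X i) : Prop :=
  ∃ σ : ∀ i, Strat X i, (∀ i, σ i ∈ SigmaG q ε i) ∧ x = stratPlay σ

/-- The family of move types of an `(m+1)`-round game whose first `m` move types are
given by `X` and whose last move type is `Y`. -/
def snocTypes {m : ℕ} (X : Fin m → Type u) (Y : Type u) : Fin (m + 1) → Type u :=
  Fin.snoc (α := fun _ => Type u) X Y

/-- Appending a final-round selection function to a family. -/
def snocSel {R : Type u} [SemilatticeSup R] {m : ℕ} {X : Fin m → Type u} {Y : Type u}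
    (ε : ∀ i, Sel R (X i)) (δ : Sel R Y) :
    ∀ i : Fin (m + 1), Sel R (snocTypes X Y i) :=
  Fin.lastCases
    (cast (by simp [snocTypes]) δ)
    (fun i => cast (by simp [snocTypes]) (ε i))

section Helpers
variable {R : Type u} [SemilatticeSup R]

theorem sup'_eq_sup' {α β : Type*} {s : Finset α} {t : Finset β} (hs : s.Nonempty)
    (ht : t.Nonempty) (f : α → R) (g : β → R)
    (h1 : ∀ a ∈ s, ∃ b ∈ t, f a = g b) (h2 : ∀ b ∈ t, ∃ a ∈ s, g b = f a) :
    s.sup' hs f = t.sup' ht g := by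
  apply le_antisymm
  · refine Finset.sup'_le _ _ fun a ha => ?_
    obtain ⟨b, hb, e⟩ := h1 a ha
    rw [e]; exact Finset.le_sup' g hb
  · refine Finset.sup'_le _ _ fun b hb => ?_
    obtain ⟨a, ha, e⟩ := h2 b hb
    rw [e]; exact Finset.le_sup' f ha

theorem mem_cast_sel {A B : Type u} (e : A = B) (h : Sel R A = Sel R B) (s : Sel R A)
    (k : B → R) (y : B) :
    y ∈ (cast h s).fn k ↔ cast e.symm y ∈ s.fn (fun a => k (cast e a)) := by
  subst e
  have : h = rfl := rfl
  subst this
  simp only [cast_eq]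

theorem upwardsClosed_cast {A B : Type u} (e : A = B) (h : Sel R A = Sel R B) (s : Sel R A)
    (hs : UpwardsClosed s) : UpwardsClosed (cast h s) := by
  subst e
  have : h = rfl := rfl
  subst this
  simpa using hs

theorem mem_comap_fn {X Y : Type u} (ε : Sel R X) (e : X ≃ Y) (k : Y → R) (y : Y) :
    y ∈ (ε.comap e).fn k ↔ e.symm y ∈ ε.fn (fun x => k (e x)) := by
  simp only [Sel.comap, Finset.mem_map, Equiv.coe_toEmbedding]
  constructor
  · rintro ⟨x, hx, rfl⟩; simpa using hx
  · intro h; exact ⟨e.symm y, h, e.apply_symm_apply y⟩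

theorem mem_prod_fn {X Y : Type u} (ε : Sel R X) (δ : Sel R Y) (Q : X × Y → R)
    (a : X) (b : Y) :
    (a, b) ∈ (ε.prod δ).fn Q ↔
      a ∈ ε.fn (fun x => (δ.fn (fun y => Q (x, y))).sup' (δ.ne _) (fun y => Q (x, y))) ∧
      b ∈ δ.fn (fun y => Q (a, y)) := by
  simp only [Sel.prod, Finset.mem_map, Finset.mem_sigma, Function.Embedding.coeFn_mk]
  constructor
  · rintro ⟨⟨x, y⟩, ⟨h1, h2⟩, h3⟩
    cases h3
    exact ⟨h1, h2⟩
  · rintro ⟨h1, h2⟩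
    exact ⟨⟨a, b⟩, ⟨h1, h2⟩, rfl⟩

theorem mem_bigProd_zero {X : Fin 1 → Type u} (ε : ∀ i, Sel R (X i)) (q : (∀ i, X i) → R)
    (x : ∀ i, X i) :
    x ∈ (bigProd ε).fn q ↔ x 0 ∈ (ε 0).fn (fun a => q (oneEquiv X a)) := by
  show x ∈ ((ε 0).comap (oneEquiv X)).fn q ↔ _
  rw [mem_comap_fn]
  have hx : (oneEquiv X).symm x = x 0 := rfl
  rw [hx]

theorem mem_bigProd_succ {n : ℕ} {X : Fin (n + 2) → Type u} (ε : ∀ i, Sel R (X i))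
    (q : (∀ i, X i) → R) (x : ∀ i, X i) :
    x ∈ (bigProd ε).fn q ↔
      (x 0 ∈ (ε 0).fn (fun a =>
        ((bigProd (fun i : Fin (n+1) => ε i.succ)).fn (fun g : ∀ i : Fin (n+1), X i.succ => q (Fin.cons a g))).sup'
          ((bigProd (fun i : Fin (n+1) => ε i.succ)).ne _) (fun g : ∀ i : Fin (n+1), X i.succ => q (Fin.cons a g))) ∧
       Fin.tail x ∈ (bigProd (fun i : Fin (n+1) => ε i.succ)).fn (fun g : ∀ i : Fin (n+1), X i.succ => q (Fin.cons (x 0) g))) := by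
  show x ∈ (((ε 0).prod (bigProd fun i : Fin (n+1) => ε i.succ)).comap (Fin.consEquiv X)).fn q ↔ _
  rw [mem_comap_fn]
  have hsymm : (Fin.consEquiv X).symm x = (x 0, Fin.tail x) := rfl
  rw [hsymm]
  have hfn : (fun p : X 0 × ∀ i : Fin (n+1), X i.succ => q (Fin.consEquiv X p)) =
      fun p => q (Fin.cons p.1 p.2) := rfl
  rw [hfn]
  exact mem_prod_fn _ _ _ _ _

end Helpers
section Helpers2
variable {n : ℕ} {X : Fin n → Type u}

theorem partialPlay_zero_eq (x y : PartialPlay X 0) : x = y := by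
  funext j hj
  exact absurd hj (Nat.not_lt_zero _)

theorem extPlay_stable (σ : ∀ i, Strat X i) (k : ℕ) (x : PartialPlay X k) :
    ∀ (m : ℕ) (j : Fin n) (h : (j : ℕ) < m) (h' : (j : ℕ) < (j : ℕ) + 1),
      extPlay σ k x m j h = extPlay σ k x ((j : ℕ) + 1) j h' := by
  intro m
  induction m with
  | zero => intro j h h'; exact absurd h (Nat.not_lt_zero _)
  | succ m ih =>
    intro j h h'
    simp only [extPlay]
    by_cases hk : (j : ℕ) < k
    · rw [dif_pos hk, dif_pos hk]
    · rw [dif_neg hk, dif_neg hk, dif_neg (lt_irrefl (j : ℕ))]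
      by_cases hm : (j : ℕ) < m
      · rw [dif_pos hm]
        have := ih j hm h'
        simp only [extPlay] at this
        rw [dif_neg hk, dif_neg (lt_irrefl (j : ℕ))] at this
        exact this
      · rw [dif_neg hm]
        have hjm : (j : ℕ) = m := by omega
        subst hjm
        rfl

theorem stratExt_eq (σ : ∀ i, Strat X i) (k : ℕ) (x : PartialPlay X k) (j : Fin n) :
    stratExt σ k x j = if h : (j : ℕ) < k then x j h
      else σ j (fun j' hj' => stratExt σ k x j') := by
  show extPlay σ k x n j j.isLt = _
  rw [extPlay_stable σ k x n j j.isLt (Nat.lt_succ_self _)]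
  simp only [extPlay]
  rw [dif_neg (lt_irrefl (j : ℕ))]
  by_cases hk : (j : ℕ) < k
  · rw [dif_pos hk, dif_pos hk]
  · rw [dif_neg hk, dif_neg hk]
    congr 1
    funext j' hj'
    show extPlay σ k x (j : ℕ) j' _ = extPlay σ k x n j' j'.isLt
    rw [extPlay_stable σ k x (j : ℕ) j' hj' (Nat.lt_succ_self _),
      extPlay_stable σ k x n j' j'.isLt (Nat.lt_succ_self _)]

theorem stratExt_unique (σ : ∀ i, Strat X i) (k : ℕ) (x : PartialPlay X k)
    (g : ∀ j, X j)
    (hg : ∀ j, g j = if h : (j : ℕ) < k then x j h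
      else σ j (fun j' hj' => g j')) :
    g = stratExt σ k x := by
  have key : ∀ (N : ℕ) (j : Fin n), (j : ℕ) < N → g j = stratExt σ k x j := by
    intro N
    induction N with
    | zero => intro j hj; exact absurd hj (Nat.not_lt_zero _)
    | succ N ih =>
      intro j hj
      rw [hg j, stratExt_eq]
      by_cases hk : (j : ℕ) < k
      · rw [dif_pos hk, dif_pos hk]
      · rw [dif_neg hk, dif_neg hk]
        congr 1
        funext j' hj'
        exact ih j' (by omega)
  funext j
  exact key n j j.isLt

end Helpers2
section Helpers3
variable {n : ℕ} {X : Fin n → Type u} {R : Type u} [SemilatticeSup R]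

theorem sigmaG_def (q : (∀ i, X i) → R) (ε : ∀ i, Sel R (X i)) (i : Fin n) :
    SigmaG q ε i = {σi | Consistent q ε (fun j =>
      if h : i = j then {h ▸ σi}
      else if hij : i < j then SigmaG q ε j
      else ∅)} := by
  rw [SigmaG]

theorem mem_sigmaG_iff (q : (∀ i, X i) → R) (ε : ∀ i, Sel R (X i)) (i : Fin n)
    (σi : Strat X i) :
    σi ∈ SigmaG q ε i ↔ ∀ x : PartialPlay X i, ∃ σ : ∀ j, Strat X j,
      (∀ j, i < j → σ j ∈ SigmaG q ε j) ∧
      σi x ∈ (ε i).fn (fun y => q (stratExt σ ((i : ℕ) + 1) (x.snoc y))) := by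
  rw [sigmaG_def]
  constructor
  · intro hmem x
    replace hmem := hmem
    obtain ⟨σ, hσ, hsel⟩ := hmem i σi (by dsimp only; rw [dif_pos rfl]; rfl) x
    refine ⟨σ, fun j hij => ?_, hsel⟩
    have := hσ j hij
    dsimp only at this
    rwa [dif_neg (ne_of_lt hij), dif_pos hij] at this
  · intro h
    intro j' σ' hσ' x
    dsimp only at hσ' ⊢
    by_cases heq : i = j'
    · subst heq
      rw [dif_pos rfl] at hσ'
      have hσ'' : σ' = σi := hσ'
      subst hσ''
      obtain ⟨σ, hσ, hsel⟩ := h x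
      refine ⟨σ, fun j hij => ?_, hsel⟩
      rw [dif_neg (ne_of_lt hij), dif_pos hij]
      exact hσ j hij
    · rw [dif_neg heq] at hσ'
      by_cases hij : i < j'
      · rw [dif_pos hij] at hσ'
        rw [sigmaG_def] at hσ'
        obtain ⟨σ, hσ, hsel⟩ := hσ' j' σ' (by dsimp only; rw [dif_pos rfl]; rfl) x
        refine ⟨σ, fun j hj => ?_, hsel⟩
        have := hσ j hj
        dsimp only at this
        rw [dif_neg (ne_of_lt hj), dif_pos hj] at this
        rw [dif_neg (ne_of_lt (lt_trans hij hj)), dif_pos (lt_trans hij hj)]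
        exact this
      · rw [dif_neg hij] at hσ'
        exact absurd hσ' (Set.notMem_empty _)

theorem sigmaG_exists [∀ i, Nonempty (X i)] (q : (∀ i, X i) → R) (ε : ∀ i, Sel R (X i)) :
    ∀ (d : ℕ) (i : Fin n), n - (i : ℕ) ≤ d → ∃ σi, σi ∈ SigmaG q ε i := by
  intro d
  induction d with
  | zero => intro i h; have := i.isLt; omega
  | succ d ih =>
    intro i _
    have later : ∀ _x : PartialPlay X i, ∃ σ : ∀ j, Strat X j,
        ∀ j, i < j → σ j ∈ SigmaG q ε j := by
      intro _
      have hch : ∀ j : Fin n, ∃ s : Strat X j, i < j → s ∈ SigmaG q ε j := by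
        intro j
        by_cases hij : i < j
        · obtain ⟨s, hs⟩ := ih j (by
            have h1 : (i : ℕ) < (j : ℕ) := hij
            have := j.isLt; omega)
          exact ⟨s, fun _ => hs⟩
        · exact ⟨fun _ => Classical.arbitrary (X j), fun hc => absurd hc hij⟩
      choose σ hσ using hch
      exact ⟨σ, hσ⟩
    choose σ hσ using later
    refine ⟨fun x => ((ε i).ne (fun y => q (stratExt (σ x) ((i : ℕ) + 1) (x.snoc y)))).choose, ?_⟩
    refine (mem_sigmaG_iff _ _ _ _).mpr ?_
    intro x
    exact ⟨σ x, hσ x, ((ε i).ne _).choose_spec⟩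

end Helpers3
section Helpers4
variable {n : ℕ} {X : Fin (n + 2) → Type u}

/-- Prepend a first move to a partial play of the subgame. -/
def consP (a : X 0) {k : ℕ} (x : PartialPlay (fun j : Fin (n + 1) => X j.succ) k) :
    PartialPlay X (k + 1) :=
  fun j hj => Fin.cases (motive := fun j => (j : ℕ) < k + 1 → X j) (fun _ => a)
    (fun j' hj' => x j' (by simpa using hj')) j hj

@[simp] theorem consP_zero (a : X 0) {k : ℕ}
    (x : PartialPlay (fun j : Fin (n + 1) => X j.succ) k) (h : ((0 : Fin (n+2)) : ℕ) < k + 1) :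
    consP a x 0 h = a := rfl

@[simp] theorem consP_succ (a : X 0) {k : ℕ}
    (x : PartialPlay (fun j : Fin (n + 1) => X j.succ) k) (j : Fin (n + 1))
    (h : ((j.succ : Fin (n+2)) : ℕ) < k + 1) :
    consP a x j.succ h = x j (by simpa using h) := by
  show Fin.cases (motive := fun j => (j : ℕ) < k + 1 → X j) _ _ j.succ h = _
  rw [Fin.cases_succ]

/-- Restrict a strategy of the full game to the subgame after first move `a`. -/
def restrictStrat (a : X 0) {j : Fin (n + 1)} (τ : Strat X j.succ) :
    Strat (fun j : Fin (n + 1) => X j.succ) j :=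
  fun x => τ (consP a x)

/-- Restrict a full profile to a subgame profile. -/
def restrictProfile (a : X 0) (σ : ∀ j, Strat X j) :
    ∀ j : Fin (n + 1), Strat (fun j : Fin (n + 1) => X j.succ) j :=
  fun j => restrictStrat a (σ j.succ)

theorem cons_stratExt (σ : ∀ j, Strat X j) (a : X 0) (k : ℕ)
    (x : PartialPlay (fun j : Fin (n + 1) => X j.succ) k) :
    stratExt σ (k + 1) (consP a x) = Fin.cons a (stratExt (restrictProfile a σ) k x) := by
  refine (stratExt_unique σ (k+1) (consP a x) _ ?_).symm
  intro j
  induction j using Fin.cases with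
  | zero =>
    rw [dif_pos (show ((0 : Fin (n+2)) : ℕ) < k + 1 by simp)]
    rfl
  | succ j' =>
    rw [Fin.cons_succ]
    by_cases hk : (j' : ℕ) < k
    · rw [dif_pos (show ((j'.succ : Fin (n+2)) : ℕ) < k + 1 by simpa using hk)]
      rw [stratExt_eq, dif_pos hk, consP_succ]
    · rw [dif_neg (show ¬ ((j'.succ : Fin (n+2)) : ℕ) < k + 1 by simpa using hk)]
      rw [stratExt_eq, dif_neg hk]
      show σ j'.succ (consP a _) = σ j'.succ _
      congr 1
      funext j'' hj''
      induction j'' using Fin.cases with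
      | zero => erw [consP_zero]; rfl
      | succ jj =>
        erw [consP_succ]
        rw [Fin.cons_succ]

theorem stratPlay_cons (σ : ∀ j, Strat X j)
    (pac : PartialPlay (fun j : Fin (n + 1) => X j.succ) 0) :
    stratPlay σ = Fin.cons (σ 0 (fun _ hj => absurd hj (Nat.not_lt_zero _)))
      (stratPlay (restrictProfile (σ 0 (fun _ hj => absurd hj (Nat.not_lt_zero _))) σ)) := by
  set a := σ 0 (fun _ hj => absurd hj (Nat.not_lt_zero _)) with ha
  have h1 : stratPlay σ = stratExt σ (0 + 1) (consP a pac) := by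
    refine stratExt_unique σ 1 (consP a pac) _ ?_
    intro j
    induction j using Fin.cases with
    | zero =>
      rw [dif_pos (show ((0 : Fin (n+2)) : ℕ) < 0 + 1 by simp), consP_zero]
      show stratExt σ 0 _ 0 = a
      erw [stratExt_eq, dif_neg (Nat.not_lt_zero _), ha]
      exact congrArg (σ 0) (partialPlay_zero_eq _ _)
    | succ j' =>
      rw [dif_neg (show ¬ ((j'.succ : Fin (n+2)) : ℕ) < 0 + 1 by simp)]
      show stratPlay σ j'.succ = _
      show stratExt σ 0 _ j'.succ = _
      erw [stratExt_eq, dif_neg (Nat.not_lt_zero _)]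
      rfl
  rw [h1, cons_stratExt]
  have h2 : stratExt (restrictProfile a σ) 0 pac = stratPlay (restrictProfile a σ) := by
    unfold stratPlay
    exact congrArg (stratExt (restrictProfile a σ) 0) (partialPlay_zero_eq _ _)
  rw [h2]

theorem consP_snoc (a : X 0) {j : Fin (n + 1)}
    (x : PartialPlay (fun j : Fin (n + 1) => X j.succ) (j : ℕ)) (y : X j.succ) :
    consP a (PartialPlay.snoc (i := j) x y) =
      PartialPlay.snoc (i := j.succ) (consP a x) y := by
  funext j2 hj2
  induction j2 using Fin.cases with
  | zero =>
    rw [consP_zero]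
    unfold PartialPlay.snoc
    rw [dif_pos (show ((0 : Fin (n+2)) : ℕ) < ((j.succ : Fin (n+2)) : ℕ) by
      simp [Fin.val_succ])]
    rw [consP_zero]
  | succ j2' =>
    rw [consP_succ]
    unfold PartialPlay.snoc
    by_cases hlt : (j2' : ℕ) < (j : ℕ)
    · rw [dif_pos hlt, dif_pos (show ((j2'.succ : Fin (n+2)) : ℕ) < ((j.succ : Fin (n+2)) : ℕ) by
        simpa using hlt)]
      rw [consP_succ]
    · rw [dif_neg hlt, dif_neg (show ¬ ((j2'.succ : Fin (n+2)) : ℕ) < ((j.succ : Fin (n+2)) : ℕ) by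
        simpa using hlt)]
      have hj2j : j2' = j := by
        have h1 : (j2' : ℕ) + 1 < (j : ℕ) + 1 + 1 := by simpa using hj2
        exact Fin.ext (by omega)
      subst hj2j
      rfl

end Helpers4
section Helpers5
variable {R : Type u} [SemilatticeSup R]

theorem restrict_mem_sigmaG {n : ℕ} {X : Fin (n + 2) → Type u}
    (q : (∀ i, X i) → R) (ε : ∀ i, Sel R (X i)) :
    ∀ (d : ℕ) (j : Fin (n + 1)), (n + 1) - (j : ℕ) ≤ d →
      ∀ (τ : Strat X j.succ), τ ∈ SigmaG q ε j.succ → ∀ a : X 0,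
        restrictStrat a τ ∈ SigmaG (fun g => q (Fin.cons a g))
          (fun i : Fin (n + 1) => ε i.succ) j := by
  intro d
  induction d with
  | zero => intro j h; have := j.isLt; omega
  | succ d ih =>
    intro j hd τ hτ a
    rw [mem_sigmaG_iff] at hτ ⊢
    intro x
    obtain ⟨σ, hσ, hsel⟩ := hτ (consP a x)
    refine ⟨restrictProfile a σ, ?_, ?_⟩
    · intro j2 hj2
      exact ih j2 (by
          have h1 : (j : ℕ) < (j2 : ℕ) := hj2
          have := j2.isLt; omega)
        (σ j2.succ) (hσ j2.succ (by exact Fin.succ_lt_succ_iff.mpr hj2)) a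
    · show τ (consP a x) ∈ _
      have hctx : (fun y => q (Fin.cons a (stratExt (restrictProfile a σ) ((j : ℕ) + 1)
            (x.snoc y)))) =
          (fun y => q (stratExt σ (((j.succ : Fin (n+2)) : ℕ) + 1) ((consP a x).snoc y))) := by
        funext y
        simp only [Fin.val_succ]
        rw [← cons_stratExt, consP_snoc]
      rw [show (fun y => q (stratExt σ (((j.succ : Fin (n+2)) : ℕ) + 1) ((consP a x).snoc y))) =
        (fun y => q (Fin.cons a (stratExt (restrictProfile a σ) ((j : ℕ) + 1) (x.snoc y))))
        from hctx.symm] at hsel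
      exact hsel

theorem fwd_aux : ∀ (n : ℕ) (X : Fin (n + 1) → Type u) (ε : ∀ i, Sel R (X i)),
    (∀ i : Fin (n + 1), (i : ℕ) < n → UpwardsClosed (ε i)) →
    ∀ (q : (∀ i, X i) → R) (x : ∀ i, X i),
      IsSigmaPlay q ε x → x ∈ (bigProd ε).fn q := by
  intro n
  induction n with
  | zero =>
    intro X ε _ q x hx
    obtain ⟨σ, hσ, rfl⟩ := hx
    rw [mem_bigProd_zero]
    obtain ⟨τ, _, hsel⟩ := (mem_sigmaG_iff q ε 0 (σ 0)).mp (hσ 0)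
      (fun _ hj => absurd hj (Nat.not_lt_zero _))
    have hval : stratPlay σ 0 = σ 0 (fun _ hj => absurd hj (Nat.not_lt_zero _)) := by
      show stratExt σ 0 _ 0 = _
      erw [stratExt_eq, dif_neg (Nat.not_lt_zero _)]
      exact congrArg (σ 0) (partialPlay_zero_eq _ _)
    rw [hval]
    have hctx : (fun y => q (stratExt τ (((0 : Fin 1) : ℕ) + 1)
        (PartialPlay.snoc (i := (0 : Fin 1)) (fun _ hj => absurd hj (Nat.not_lt_zero _)) y))) =
        (fun a => q (oneEquiv X a)) := by
      funext y
      congr 1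
      funext j
      have hj : j = 0 := Fin.ext (by omega)
      subst hj
      rw [stratExt_eq, dif_pos (show ((0 : Fin 1) : ℕ) < ((0 : Fin 1) : ℕ) + 1 by simp)]
      show PartialPlay.snoc _ y 0 _ = _
      unfold PartialPlay.snoc
      rw [dif_neg (lt_irrefl _)]
      rfl
    rw [hctx] at hsel
    exact hsel
  | succ n ihn =>
    intro X ε hup q x hx
    obtain ⟨σ, hσ, rfl⟩ := hx
    rw [mem_bigProd_succ]
    have pempty : PartialPlay X ((0 : Fin (n+2)) : ℕ) := fun _ hj => absurd hj (Nat.not_lt_zero _)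
    set a := σ 0 (fun _ hj => absurd hj (Nat.not_lt_zero _)) with ha
    have hplay := stratPlay_cons σ (fun _ hj => absurd hj (Nat.not_lt_zero _))
    rw [← ha] at hplay
    have hup' : ∀ i : Fin (n + 1), (i : ℕ) < n → UpwardsClosed (ε i.succ) :=
      fun i hi => hup i.succ (by simp only [Fin.val_succ]; omega)
    obtain ⟨τ, hτ, hsel⟩ := (mem_sigmaG_iff q ε 0 (σ 0)).mp (hσ 0)
      (fun _ hj => absurd hj (Nat.not_lt_zero _))
    have hgmem : ∀ y : X 0, stratPlay (restrictProfile y τ) ∈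
        (bigProd (fun i : Fin (n+1) => ε i.succ)).fn
          (fun g : ∀ i : Fin (n+1), X i.succ => q (Fin.cons y g)) := by
      intro y
      refine ihn _ _ hup' _ _ ⟨restrictProfile y τ, fun j => ?_, rfl⟩
      exact restrict_mem_sigmaG q ε (n + 1) j (by omega) (τ j.succ)
        (hτ j.succ (Fin.succ_pos j)) y
    have hctx : ∀ y : X 0, stratExt τ (((0 : Fin (n+2)) : ℕ) + 1)
        (PartialPlay.snoc (i := (0 : Fin (n+2)))
          (fun _ hj => absurd hj (Nat.not_lt_zero _)) y) =
        Fin.cons y (stratPlay (restrictProfile y τ)) := by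
      intro y
      have h1 : PartialPlay.snoc (i := (0 : Fin (n+2)))
          (fun _ hj => absurd hj (Nat.not_lt_zero _)) y =
          consP y (fun _ hj => absurd hj (Nat.not_lt_zero _)) := by
        funext j2 hj2
        induction j2 using Fin.cases with
        | zero =>
          erw [consP_zero]
          unfold PartialPlay.snoc
          rw [dif_neg (lt_irrefl _)]
        | succ j2' => exact absurd hj2 (by simp)
      erw [h1, cons_stratExt]
      refine congrArg (Fin.cons y) ?_
      unfold stratPlay
      exact congrArg (stratExt _ 0) (partialPlay_zero_eq _ _)
    have hx0 : stratPlay σ 0 = a := by rw [hplay]; exact Fin.cons_zero _ _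
    constructor
    · rw [hx0]
      have hupc := hup 0 (Nat.succ_pos n)
      classical
      set T : X 0 → Finset (∀ i : Fin (n+1), X i.succ) := fun a' =>
        (bigProd (fun i : Fin (n+1) => ε i.succ)).fn
          (fun g : ∀ i : Fin (n+1), X i.succ => q (Fin.cons a' g)) with hT
      set I : X 0 → Finset (X 0 → R) := fun a' =>
        (T a').image (fun g => Function.const (X 0) (q (Fin.cons a' g))) with hIdef
      have hI : ∀ a', (I a').Nonempty := fun a' =>
        Finset.Nonempty.image ((bigProd (fun i : Fin (n+1) => ε i.succ)).ne _) _
      set p : X 0 → X 0 → R := fun a' =>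
        Function.const (X 0) (q (Fin.cons a' (stratPlay (restrictProfile a' τ)))) with hpdef
      have hp : ∀ a', p a' ∈ I a' := fun a' => Finset.mem_image_of_mem _ (hgmem a')
      have hmem0 : a ∈ (ε 0).fn (fun a' => p a' a') := by
        have heq : (fun a' => p a' a') = fun y => q (stratExt τ (((0 : Fin (n+2)) : ℕ) + 1)
            (PartialPlay.snoc (i := (0 : Fin (n+2)))
              (fun _ hj => absurd hj (Nat.not_lt_zero _)) y)) := by
          funext y; rw [hctx y]; rfl
        rw [heq]; exact hsel
      have hres := hupc I hI p hp a hmem0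
      have hctx2 : (fun a' => (I a').sup' (hI a') (fun P => P a')) =
          (fun a' => (T a').sup'
            ((bigProd (fun i : Fin (n+1) => ε i.succ)).ne _)
            (fun g => q (Fin.cons a' g))) := by
        funext a'
        refine sup'_eq_sup' _ _ _ _ ?_ ?_
        · intro P hP
          obtain ⟨g, hg, rfl⟩ := Finset.mem_image.mp hP
          exact ⟨g, hg, rfl⟩
        · intro g hg
          exact ⟨Function.const (X 0) (q (Fin.cons a' g)), Finset.mem_image_of_mem _ hg, rfl⟩
      rw [hctx2] at hres
      exact hres
    · rw [hx0, hplay, Fin.tail_cons]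
      refine ihn _ _ hup' _ _ ⟨restrictProfile a σ, fun j => ?_, rfl⟩
      exact restrict_mem_sigmaG q ε (n + 1) j (by omega) (σ j.succ) (hσ j.succ) a

end Helpers5
section Helpers6
variable {R : Type u} [SemilatticeSup R]

theorem exlast_a : ∀ (n : ℕ) (X : Fin (n + 1) → Type u) (ε : ∀ i, Sel R (X i))
    (F : X (Fin.last n) → R) (g : ∀ j, X j),
    g ∈ (bigProd ε).fn (fun g => F (g (Fin.last n))) →
      g (Fin.last n) ∈ (ε (Fin.last n)).fn F := by
  intro n
  induction n with
  | zero =>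
    intro X ε F g hg
    rw [mem_bigProd_zero] at hg
    have h1 : (fun a => F (oneEquiv X a (Fin.last 0))) = F := by
      funext a
      congr 1
    rw [h1] at hg
    exact hg
  | succ n ih =>
    intro X ε F g hg
    rw [mem_bigProd_succ] at hg
    obtain ⟨-, h2⟩ := hg
    have h3 : (fun h : ∀ i : Fin (n+1), X i.succ =>
        F (Fin.cons (g 0) h (Fin.last (n+1)))) =
        fun h => F (h (Fin.last n)) := by
      funext h
      show F (Fin.cons (g 0) h ((Fin.last n).succ)) = F (h (Fin.last n))
      rw [Fin.cons_succ]
    rw [h3] at h2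
    exact ih (fun i : Fin (n+1) => X i.succ) (fun i => ε i.succ) F (Fin.tail g) h2

theorem exlast_b : ∀ (n : ℕ) (X : Fin (n + 1) → Type u) (ε : ∀ i, Sel R (X i))
    (F : X (Fin.last n) → R) (y : X (Fin.last n)),
    y ∈ (ε (Fin.last n)).fn F →
      ∃ g ∈ (bigProd ε).fn (fun g => F (g (Fin.last n))), g (Fin.last n) = y := by
  intro n
  induction n with
  | zero =>
    intro X ε F y hy
    refine ⟨oneEquiv X y, ?_, rfl⟩
    rw [mem_bigProd_zero]
    have h1 : (fun a => F (oneEquiv X a (Fin.last 0))) = F := by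
      funext a
      congr 1
    rw [h1]
    exact hy
  | succ n ih =>
    intro X ε F y hy
    obtain ⟨g', hg', hg'y⟩ := ih (fun i : Fin (n+1) => X i.succ) (fun i => ε i.succ) F y
      hy
    obtain ⟨a, ha⟩ := (ε 0).ne (fun a =>
      ((bigProd (fun i : Fin (n+1) => ε i.succ)).fn
        (fun h : ∀ i : Fin (n+1), X i.succ => F (Fin.cons a h (Fin.last (n+1))))).sup'
        ((bigProd (fun i : Fin (n+1) => ε i.succ)).ne _)
        (fun h => F (Fin.cons a h (Fin.last (n+1)))))
    refine ⟨Fin.cons a g', ?_, ?_⟩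
    · rw [mem_bigProd_succ]
      constructor
      · rw [Fin.cons_zero]
        exact ha
      · rw [Fin.cons_zero, Fin.tail_cons]
        have h3 : (fun h : ∀ i : Fin (n+1), X i.succ =>
            F (Fin.cons a h (Fin.last (n+1)))) = fun h => F (h (Fin.last n)) := by
          funext h
          show F (Fin.cons a h ((Fin.last n).succ)) = F (h (Fin.last n))
          rw [Fin.cons_succ]
        rw [h3]
        exact hg'
    · show Fin.cons a g' ((Fin.last n).succ) = y
      rw [Fin.cons_succ]
      exact hg'y

theorem suplast (n : ℕ) (X : Fin (n + 1) → Type u) (ε : ∀ i, Sel R (X i))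
    (F : X (Fin.last n) → R) :
    ((bigProd ε).fn (fun g => F (g (Fin.last n)))).sup' ((bigProd ε).ne _)
      (fun g => F (g (Fin.last n))) =
    ((ε (Fin.last n)).fn F).sup' ((ε (Fin.last n)).ne _) F := by
  refine sup'_eq_sup' _ _ _ _ ?_ ?_
  · intro g hg
    exact ⟨g (Fin.last n), exlast_a n X ε F g hg, rfl⟩
  · intro y hy
    obtain ⟨g, hg, hgy⟩ := exlast_b n X ε F y hy
    exact ⟨g, hg, by rw [hgy]⟩

theorem conv_aux : ∀ (n : ℕ) (X : Fin (n + 1) → Type u) (ε : ∀ i, Sel R (X i))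
    (i : Fin (n + 1)), (i : ℕ) < n → ∀ (F : X i → X (Fin.last n) → R) (x : ∀ j, X j),
    x ∈ (bigProd ε).fn (fun g => F (g i) (g (Fin.last n))) →
    x i ∈ (ε i).fn (fun a => ((ε (Fin.last n)).fn (F a)).sup'
      ((ε (Fin.last n)).ne _) (F a)) := by
  intro n
  induction n with
  | zero => intro X ε i hi; exact absurd hi (Nat.not_lt_zero _)
  | succ n ih =>
    intro X ε i hi F x hx
    rw [mem_bigProd_succ] at hx
    induction i using Fin.cases with
    | zero =>
      obtain ⟨h1, -⟩ := hx
      have hctx : ∀ a : X 0, (fun g : ∀ i : Fin (n+1), X i.succ =>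
          F (Fin.cons a g 0) (Fin.cons a g (Fin.last (n+1)))) =
          fun g => F a (g (Fin.last n)) := by
        intro a
        funext g
        rw [Fin.cons_zero]
        show F a (Fin.cons a g ((Fin.last n).succ)) = F a (g (Fin.last n))
        rw [Fin.cons_succ]
      have h2 : (fun a => ((bigProd (fun i : Fin (n+1) => ε i.succ)).fn
            (fun g : ∀ i : Fin (n+1), X i.succ =>
              F (Fin.cons a g 0) (Fin.cons a g (Fin.last (n+1))))).sup'
            ((bigProd (fun i : Fin (n+1) => ε i.succ)).ne _)
            (fun g => F (Fin.cons a g 0) (Fin.cons a g (Fin.last (n+1))))) =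
          (fun a => ((ε (Fin.last (n+1))).fn (F a)).sup'
            ((ε (Fin.last (n+1))).ne _) (F a)) := by
        funext a
        have := hctx a
        rw [this]
        rw [suplast n (fun i : Fin (n+1) => X i.succ) (fun i => ε i.succ) (F a)]
        rfl
      rw [h2] at h1
      exact h1
    | succ i' =>
      obtain ⟨-, h2⟩ := hx
      have hctx : (fun g : ∀ i : Fin (n+1), X i.succ =>
          F (Fin.cons (x 0) g i'.succ) (Fin.cons (x 0) g (Fin.last (n+1)))) =
          fun g => F (g i') (g (Fin.last n)) := by
        funext g
        rw [Fin.cons_succ]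
        show F (g i') (Fin.cons (x 0) g ((Fin.last n).succ)) = F (g i') (g (Fin.last n))
        rw [Fin.cons_succ]
      rw [hctx] at h2
      have hi' : (i' : ℕ) < n := by
        have : (i' : ℕ) + 1 < n + 1 := by simpa using hi
        omega
      exact ih (fun i : Fin (n+1) => X i.succ) (fun i => ε i.succ) i' hi' F (Fin.tail x) h2

end Helpers6
section Helpers7
variable {R : Type u} [SemilatticeSup R]

theorem snocTypes_last' {m : ℕ} (X : Fin m → Type u) (Y : Type u) :
    snocTypes X Y (Fin.last m) = Y := by simp [snocTypes]

theorem snocTypes_castSucc' {m : ℕ} (X : Fin m → Type u) (Y : Type u) (i : Fin m) :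
    snocTypes X Y i.castSucc = X i := by simp [snocTypes]

theorem snocTypes_nonempty {m : ℕ} {X : Fin m → Type u} {Y : Type u}
    [∀ i, Nonempty (X i)] [Nonempty Y] (j : Fin (m + 1)) : Nonempty (snocTypes X Y j) := by
  induction j using Fin.lastCases with
  | last => rw [snocTypes_last']; infer_instance
  | cast i => rw [snocTypes_castSucc']; infer_instance

theorem mem_snocSel_last {m : ℕ} {X : Fin m → Type u} {Y : Type u}
    (ε : ∀ i, Sel R (X i)) (δ : Sel R Y) (k : snocTypes X Y (Fin.last m) → R)
    (y : snocTypes X Y (Fin.last m)) :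
    y ∈ (snocSel ε δ (Fin.last m)).fn k ↔
      cast (snocTypes_last' X Y) y ∈
        δ.fn (fun b => k (cast (snocTypes_last' X Y).symm b)) := by
  unfold snocSel
  rw [Fin.lastCases_last]
  exact mem_cast_sel (snocTypes_last' X Y).symm _ δ k y

theorem mem_snocSel_castSucc {m : ℕ} {X : Fin m → Type u} {Y : Type u}
    (ε : ∀ i, Sel R (X i)) (δ : Sel R Y) (i : Fin m)
    (k : snocTypes X Y i.castSucc → R) (y : snocTypes X Y i.castSucc) :
    y ∈ (snocSel ε δ i.castSucc).fn k ↔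
      cast (snocTypes_castSucc' X Y i) y ∈
        (ε i).fn (fun a => k (cast (snocTypes_castSucc' X Y i).symm a)) := by
  unfold snocSel
  rw [Fin.lastCases_castSucc]
  exact mem_cast_sel (snocTypes_castSucc' X Y i).symm _ (ε i) k y

theorem upwardsClosed_snocSel {m : ℕ} {X : Fin m → Type u} {Y : Type u}
    (ε : ∀ i, Sel R (X i)) (δ : Sel R Y) (i : Fin m) (h : UpwardsClosed (ε i)) :
    UpwardsClosed (snocSel ε δ i.castSucc) := by
  unfold snocSel
  rw [Fin.lastCases_castSucc]
  exact upwardsClosed_cast (snocTypes_castSucc' X Y i).symm _ (ε i) h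

variable {n : ℕ} {X : Fin n → Type u}

theorem snoc_lt {i : Fin n} (x : PartialPlay X (i : ℕ)) (y : X i) (j : Fin n)
    {hj : (j : ℕ) < (i : ℕ) + 1} (hlt : (j : ℕ) < (i : ℕ)) :
    PartialPlay.snoc x y j hj = x j hlt := by
  unfold PartialPlay.snoc
  rw [dif_pos hlt]

theorem snoc_self {i : Fin n} (x : PartialPlay X (i : ℕ)) (y : X i)
    {hj : (i : ℕ) < (i : ℕ) + 1} :
    PartialPlay.snoc x y i hj = y := by
  unfold PartialPlay.snoc
  rw [dif_neg (lt_irrefl _)]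

theorem stratPlay_eq (σ : ∀ i, Strat X i) (j : Fin n) :
    stratPlay σ j = σ j (fun j' _ => stratPlay σ j') := by
  unfold stratPlay stratExt
  have := stratExt_eq σ 0 (fun _ hj => absurd hj (Nat.not_lt_zero _)) j
  unfold stratExt at this
  rw [this, dif_neg (Nat.not_lt_zero _)]

theorem cast_symm_cast {A B : Type u} (e : A = B) (v : A) :
    cast e.symm (cast e v) = v := by subst e; rfl

theorem cast_cast_symm {A B : Type u} (e : A = B) (v : B) :
    cast e (cast e.symm v) = v := by subst e; rfl
end Helpers7
theorem converse_aux {R : Type u} [SemilatticeSup R]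
    [Nontrivial R] {m : ℕ} {X : Fin m → Type u}
    [∀ i, Fintype (X i)] [∀ i, Nonempty (X i)]
    (ε : ∀ i, Sel R (X i))
    (H : ∀ (Y : Type u), Fintype Y → Nonempty Y →
        ∀ (δ : Sel R Y) (q : (∀ i, snocTypes X Y i) → R)
          (x : ∀ i, snocTypes X Y i),
          IsSigmaPlay q (snocSel ε δ) x → x ∈ (bigProd (snocSel ε δ)).fn q)
    (i : Fin m) : UpwardsClosed (ε i) := by
  classical
  intro I hI p hp x hx
  obtain ⟨r₀, r₁, hr⟩ := exists_pair_ne R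
  set U : Finset (X i → R) := Finset.univ.biUnion I with hU
  let Y : Type u := {P : X i → R // P ∈ U} ⊕ X i
  haveI fY : Fintype Y := by
    haveI : Fintype {P : X i → R // P ∈ U} := FinsetCoe.fintype U
    infer_instance
  haveI nY : Nonempty Y := ⟨Sum.inr (Classical.arbitrary (X i))⟩
  let K : X i → Y → R := fun a y =>
    Sum.elim (fun P : {P : X i → R // P ∈ U} => P.val a)
      (fun x'' : X i => if x'' = a then r₁ else r₀) y
  have Kinj : Function.Injective K := by
    intro a a' h
    by_contra hne
    have h1 : K a (Sum.inr a) = r₁ := by simp [K]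
    have h2 : K a' (Sum.inr a) = r₀ := by
      show (if a = a' then r₁ else r₀) = r₀
      rw [if_neg hne]
    rw [h] at h1
    exact hr (h2.symm.trans h1)
  have hmemU : ∀ (a : X i) (P : X i → R), P ∈ I a → P ∈ U := fun a P hPa =>
    Finset.mem_biUnion.mpr ⟨a, Finset.mem_univ a, hPa⟩
  let S : X i → Finset Y := fun a => (I a).attach.map
    ⟨fun P => Sum.inl ⟨P.val, hmemU a P.val P.prop⟩,
     fun P Q h => by
       simp only at h
       injection h with h'
       exact Subtype.ext (congrArg (Subtype.val : {P : X i → R // P ∈ U} → (X i → R)) h')⟩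
  have hSne : ∀ a, (S a).Nonempty :=
    fun a => Finset.Nonempty.map (Finset.attach_nonempty_iff.mpr (hI a))
  have hmemS : ∀ (a : X i) (P : X i → R) (hP : P ∈ I a),
      (Sum.inl ⟨P, hmemU a P hP⟩ : Y) ∈ S a := fun a P hP =>
    Finset.mem_map.mpr ⟨⟨P, hP⟩, Finset.mem_attach _ _, rfl⟩
  have hSmem : ∀ (a : X i) (y : Y), y ∈ S a →
      ∃ P, ∃ hP : P ∈ I a, y = Sum.inl ⟨P, hmemU a P hP⟩ := by
    intro a y hy
    obtain ⟨P, -, rfl⟩ := Finset.mem_map.mp hy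
    exact ⟨P.val, P.prop, rfl⟩
  let δ : Sel R Y :=
    { fn := fun k => if h : ∃ a, k = K a then S h.choose
        else {Sum.inr (Classical.arbitrary (X i))}
      ne := fun k => by
        show (if h : ∃ a, k = K a then S h.choose
          else ({Sum.inr (Classical.arbitrary (X i))} : Finset Y)).Nonempty
        by_cases h : ∃ a, k = K a
        · rw [dif_pos h]; exact hSne _
        · rw [dif_neg h]; exact ⟨_, Finset.mem_singleton_self _⟩ }
  have δK : ∀ a, δ.fn (K a) = S a := by
    intro a
    show (if h : ∃ a', K a = K a' then S h.choose else _) = S a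
    rw [dif_pos ⟨a, rfl⟩]
    have hc : (⟨a, rfl⟩ : ∃ a', K a = K a').choose = a :=
      Kinj (Exists.choose_spec (⟨a, rfl⟩ : ∃ a', K a = K a')).symm
    rw [hc]
  -- outcome function
  let F : snocTypes X Y i.castSucc → snocTypes X Y (Fin.last m) → R :=
    fun A B => K (cast (snocTypes_castSucc' X Y i) A) (cast (snocTypes_last' X Y) B)
  let q : (∀ j, snocTypes X Y j) → R := fun g => F (g i.castSucc) (g (Fin.last m))
  haveI : ∀ j : Fin (m + 1), Nonempty (snocTypes X Y j) := snocTypes_nonempty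
  have hσ0 : ∀ j : Fin (m + 1), ∃ s, s ∈ SigmaG q (snocSel ε δ) j :=
    fun j => sigmaG_exists q (snocSel ε δ) (m + 1) j (by omega)
  choose σ0 hσ0mem using hσ0
  -- the distinguished final-round strategy
  let mkY : X i → Y := fun v => Sum.inl ⟨p v, hmemU v (p v) (hp v)⟩
  let σlast : Strat (snocTypes X Y) (Fin.last m) := fun xp =>
    cast (snocTypes_last' X Y).symm
      (mkY (cast (snocTypes_castSucc' X Y i) (xp i.castSucc i.isLt)))
  -- the outcome of a full extension
  have hctxlast : ∀ (σ1 : ∀ j, Strat (snocTypes X Y) j)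
      (xp : PartialPlay (snocTypes X Y) ((Fin.last m : ℕ))) (z : snocTypes X Y (Fin.last m)),
        q (stratExt σ1 ((Fin.last m : ℕ) + 1) (xp.snoc z)) =
          K (cast (snocTypes_castSucc' X Y i) (xp i.castSucc i.isLt))
            (cast (snocTypes_last' X Y) z) := by
    intro σ1 xp z
    have hw : ∀ j : Fin (m + 1),
        stratExt σ1 ((Fin.last m : ℕ) + 1) (xp.snoc z) j = (xp.snoc z) j j.isLt := by
      intro j
      rw [stratExt_eq, dif_pos (show (j : ℕ) < (Fin.last m : ℕ) + 1 from j.isLt)]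
    show F _ _ = _
    rw [hw, hw]
    rw [snoc_lt xp z i.castSucc i.isLt, snoc_self]
  -- σlast belongs to Σ(G)
  have hσlast : σlast ∈ SigmaG q (snocSel ε δ) (Fin.last m) := by
    rw [mem_sigmaG_iff]
    intro xp
    refine ⟨σ0, fun j hj => absurd hj (not_lt.mpr (Fin.le_last j)), ?_⟩
    have hctx : (fun b : Y => q (stratExt σ0 ((Fin.last m : ℕ) + 1)
        (xp.snoc (cast (snocTypes_last' X Y).symm b)))) =
        K (cast (snocTypes_castSucc' X Y i) (xp i.castSucc i.isLt)) := by
      funext b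
      rw [hctxlast σ0 xp _, cast_cast_symm]
    have h7 : mkY (cast (snocTypes_castSucc' X Y i) (xp i.castSucc i.isLt)) ∈
        δ.fn (fun b : Y => q (stratExt σ0 ((Fin.last m : ℕ) + 1)
          (xp.snoc (cast (snocTypes_last' X Y).symm b)))) := by
      rw [hctx, δK]
      exact hmemS _ _ (hp _)
    have helem : cast (snocTypes_last' X Y) (σlast xp) =
        mkY (cast (snocTypes_castSucc' X Y i) (xp i.castSucc i.isLt)) :=
      cast_cast_symm _ _
    have h8 : cast (snocTypes_last' X Y) (σlast xp) ∈
        δ.fn (fun b : Y => q (stratExt σ0 ((Fin.last m : ℕ) + 1)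
          (xp.snoc (cast (snocTypes_last' X Y).symm b)))) := by
      rw [helem]; exact h7
    exact (mem_snocSel_last ε δ _ _).mpr h8
  -- the round-i strategy playing x
  let σi : Strat (snocTypes X Y) i.castSucc := fun _ => cast (snocTypes_castSucc' X Y i).symm x
  have hσi : σi ∈ SigmaG q (snocSel ε δ) i.castSucc := by
    rw [mem_sigmaG_iff]
    intro xp
    refine ⟨Fin.lastCases σlast (fun j => σ0 j.castSucc), fun j hj => ?_, ?_⟩
    · induction j using Fin.lastCases with
      | last =>
        show Fin.lastCases (motive := fun j => Strat (snocTypes X Y) j) σlast (fun j => σ0 j.castSucc) (Fin.last m) ∈ _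
        rw [Fin.lastCases_last]; exact hσlast
      | cast j =>
        show Fin.lastCases (motive := fun j => Strat (snocTypes X Y) j) σlast (fun j => σ0 j.castSucc) j.castSucc ∈ _
        rw [Fin.lastCases_castSucc]; exact hσ0mem _
    · set σ1 : ∀ j, Strat (snocTypes X Y) j :=
        Fin.lastCases σlast (fun j => σ0 j.castSucc) with hσ1def
      have hctx : (fun a : X i => q (stratExt σ1 ((i.castSucc : ℕ) + 1)
          (xp.snoc (cast (snocTypes_castSucc' X Y i).symm a)))) = fun a => p a a := by
        funext a
        have hwi : stratExt σ1 ((i.castSucc : ℕ) + 1)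
            (xp.snoc (cast (snocTypes_castSucc' X Y i).symm a)) i.castSucc =
            cast (snocTypes_castSucc' X Y i).symm a := by
          rw [stratExt_eq, dif_pos (Nat.lt_succ_self _)]
          exact snoc_self xp _
        have hwlast : stratExt σ1 ((i.castSucc : ℕ) + 1)
            (xp.snoc (cast (snocTypes_castSucc' X Y i).symm a)) (Fin.last m) =
            cast (snocTypes_last' X Y).symm
              (mkY (cast (snocTypes_castSucc' X Y i)
                (cast (snocTypes_castSucc' X Y i).symm a))) := by
          rw [stratExt_eq, dif_neg (show ¬ ((Fin.last m : ℕ) < (i.castSucc : ℕ) + 1) by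
            have := i.isLt
            simp only [Fin.val_last, Fin.coe_castSucc]
            omega)]
          have h5 : σ1 (Fin.last m) = σlast := Fin.lastCases_last
          rw [h5]
          exact congrArg (fun v => cast (snocTypes_last' X Y).symm
            (mkY (cast (snocTypes_castSucc' X Y i) v))) hwi
        show F (stratExt σ1 ((i.castSucc : ℕ) + 1)
            (xp.snoc (cast (snocTypes_castSucc' X Y i).symm a)) i.castSucc)
          (stratExt σ1 ((i.castSucc : ℕ) + 1)
            (xp.snoc (cast (snocTypes_castSucc' X Y i).symm a)) (Fin.last m)) = p a a
        rw [hwi, hwlast]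
        show K (cast (snocTypes_castSucc' X Y i) (cast (snocTypes_castSucc' X Y i).symm a))
          (cast (snocTypes_last' X Y) (cast (snocTypes_last' X Y).symm
            (mkY (cast (snocTypes_castSucc' X Y i)
              (cast (snocTypes_castSucc' X Y i).symm a))))) = p a a
        rw [cast_cast_symm (snocTypes_last' X Y)]
        rw [cast_cast_symm (snocTypes_castSucc' X Y i) a]
        rfl
      have helem : cast (snocTypes_castSucc' X Y i) (σi xp) = x := cast_cast_symm _ _
      have h7 : x ∈ (ε i).fn (fun a : X i => q (stratExt σ1 ((i.castSucc : ℕ) + 1)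
          (xp.snoc (cast (snocTypes_castSucc' X Y i).symm a)))) := by
        rw [hctx]; exact hx
      have h8 : cast (snocTypes_castSucc' X Y i) (σi xp) ∈
          (ε i).fn (fun a : X i => q (stratExt σ1 ((i.castSucc : ℕ) + 1)
            (xp.snoc (cast (snocTypes_castSucc' X Y i).symm a)))) := by
        rw [helem]; exact h7
      exact (mem_snocSel_castSucc ε δ i _ _).mpr h8
  -- the full profile
  let σmid : ∀ j : Fin m, Strat (snocTypes X Y) j.castSucc := fun j =>
    if h : i = j then h ▸ σi else σ0 j.castSucc
  let σfin : ∀ j, Strat (snocTypes X Y) j := Fin.lastCases σlast σmid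
  have hσfin : ∀ j, σfin j ∈ SigmaG q (snocSel ε δ) j := by
    intro j
    show Fin.lastCases σlast σmid j ∈ SigmaG q (snocSel ε δ) j
    induction j using Fin.lastCases with
    | last =>
      rw [Fin.lastCases_last]
      exact hσlast
    | cast j =>
      rw [Fin.lastCases_castSucc]
      show (if h : i = j then h ▸ σi else σ0 j.castSucc) ∈ _
      by_cases h : i = j
      · subst h
        rw [dif_pos rfl]
        exact hσi
      · rw [dif_neg h]
        exact hσ0mem _
  have hbig := H Y fY nY δ q (stratPlay σfin) ⟨σfin, hσfin, rfl⟩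
  have hconv := conv_aux m (snocTypes X Y) (snocSel ε δ) i.castSucc i.isLt F
    (stratPlay σfin) hbig
  -- the move played at round i is x
  have hpi : stratPlay σfin i.castSucc = cast (snocTypes_castSucc' X Y i).symm x := by
    rw [stratPlay_eq]
    show Fin.lastCases (motive := fun j => Strat (snocTypes X Y) j) σlast σmid i.castSucc
      (fun j' _ => stratPlay σfin j') = cast (snocTypes_castSucc' X Y i).symm x
    rw [Fin.lastCases_castSucc]
    show (if h : i = i then h ▸ σi else σ0 i.castSucc)
      (fun j' _ => stratPlay σfin j') = cast (snocTypes_castSucc' X Y i).symm x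
    rw [dif_pos rfl]
  -- transport the conclusion back
  have h9 := (mem_snocSel_castSucc ε δ i _ _).mp hconv
  have h10 : cast (snocTypes_castSucc' X Y i) (stratPlay σfin i.castSucc) = x := by
    rw [hpi]; exact cast_cast_symm _ _
  rw [h10] at h9
  have h11 : x ∈ (ε i).fn (fun a : X i =>
      ((snocSel ε δ (Fin.last m)).fn (F (cast (snocTypes_castSucc' X Y i).symm a))).sup'
        ((snocSel ε δ (Fin.last m)).ne _)
        (F (cast (snocTypes_castSucc' X Y i).symm a))) := h9
  have hfinal : (fun a : X i =>
      ((snocSel ε δ (Fin.last m)).fn (F (cast (snocTypes_castSucc' X Y i).symm a))).sup'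
        ((snocSel ε δ (Fin.last m)).ne _)
        (F (cast (snocTypes_castSucc' X Y i).symm a))) =
      fun a => (I a).sup' (hI a) (fun P => P a) := by
    funext a
    have hctxK : (fun b : Y => F (cast (snocTypes_castSucc' X Y i).symm a)
        (cast (snocTypes_last' X Y).symm b)) = K a := by
      funext b
      show K (cast (snocTypes_castSucc' X Y i) (cast (snocTypes_castSucc' X Y i).symm a))
        (cast (snocTypes_last' X Y) (cast (snocTypes_last' X Y).symm b)) = K a b
      rw [cast_cast_symm, cast_cast_symm]
    refine sup'_eq_sup' _ _ _ _ ?_ ?_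
    · intro y' hy'
      have hy'' := (mem_snocSel_last ε δ _ _).mp hy'
      rw [hctxK, δK] at hy''
      obtain ⟨P, hPmem, hyeq⟩ := hSmem a _ hy''
      refine ⟨P, hPmem, ?_⟩
      show K (cast (snocTypes_castSucc' X Y i) (cast (snocTypes_castSucc' X Y i).symm a))
        (cast (snocTypes_last' X Y) y') = P a
      rw [cast_cast_symm, hyeq]
      rfl
    · intro P hP
      refine ⟨cast (snocTypes_last' X Y).symm (Sum.inl ⟨P, hmemU a P hP⟩), ?_, ?_⟩
      · refine (mem_snocSel_last ε δ _ _).mpr ?_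
        have he : cast (snocTypes_last' X Y)
            (cast (snocTypes_last' X Y).symm (Sum.inl ⟨P, hmemU a P hP⟩ : Y)) =
            (Sum.inl ⟨P, hmemU a P hP⟩ : Y) := cast_cast_symm _ _
        have h12 : (Sum.inl ⟨P, hmemU a P hP⟩ : Y) ∈
            δ.fn (fun b : Y => F (cast (snocTypes_castSucc' X Y i).symm a)
              (cast (snocTypes_last' X Y).symm b)) := by
          rw [hctxK, δK]
          exact hmemS a P hP
        rw [he]
        exact h12
      · show P a = K (cast (snocTypes_castSucc' X Y i) (cast (snocTypes_castSucc' X Y i).symm a))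
          (cast (snocTypes_last' X Y) (cast (snocTypes_last' X Y).symm
            (Sum.inl ⟨P, hmemU a P hP⟩ : Y)))
        rw [cast_cast_symm, cast_cast_symm]
        rfl
  rw [hfinal] at h11
  exact h11
/-- `ε_i` (for the non-final rounds `i`) are all upwards closed iff for every choice
of final-round move type `Xₙ`, selection function `εₙ` and outcome function `q`,
every `Σ(G)` play of the resulting game `G` lies in the `(m+1)`-fold product of
selection functions on `q`. -/
theorem upwardsClosed_iff_sigmaPlays_subset_bigProd {R : Type u} [SemilatticeSup R]
    [Nontrivial R] {m : ℕ} {X : Fin m → Type u}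
    [∀ i, Fintype (X i)] [∀ i, Nonempty (X i)]
    (ε : ∀ i, Sel R (X i)) :
    (∀ i, UpwardsClosed (ε i)) ↔
      ∀ (Y : Type u), Fintype Y → Nonempty Y →
        ∀ (δ : Sel R Y) (q : (∀ i, snocTypes X Y i) → R)
          (x : ∀ i, snocTypes X Y i),
          IsSigmaPlay q (snocSel ε δ) x → x ∈ (bigProd (snocSel ε δ)).fn q := by
  constructor
  · intro hup Y _ _ δ q x hx
    refine fwd_aux m (snocTypes X Y) (snocSel ε δ) ?_ q x hx
    intro j hj
    have hj' : j = Fin.castSucc ⟨(j : ℕ), hj⟩ := Fin.ext rfl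
    rw [hj']
    exact upwardsClosed_snocSel ε δ _ (hup _)
  · intro H i
    exact converse_aux ε H i
end
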